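/- arXiv:2402.12269 — 3 statements merged into one kernel-verified Lean document; each statement's English description precedes it below -/
import Mathlib

section
/- The Birkhoff polytope of doubly stochastic m×m matrices is the convex hull of the set of m×m permutation matrices. -/
/-- The set of doubly stochastic m×m real matrices. -/
def DS (m : ℕ) : Set (Matrix (Fin m) (Fin m) ℝ) :=
  {T | (∀ i j, 0 ≤ T i j) ∧ (∀ i, ∑ j, T i j = 1) ∧ (∀ j, ∑ i, T i j = 1)}

/-- A permutation matrix: a 0/1 matrix with exactly one 1 in each row and column. -/
def IsPermMatrix {m : ℕ} (P : Matrix (Fin m) (Fin m) ℝ) : Prop :=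
  (∀ i j, P i j = 0 ∨ P i j = 1) ∧ (∀ i, ∃! j, P i j = 1) ∧ (∀ j, ∃! i, P i j = 1)

lemma permMatrix_apply {m : ℕ} (σ : Equiv.Perm (Fin m)) (i j : Fin m) :
    σ.permMatrix ℝ i j = if σ i = j then 1 else 0 := by
  simp [Equiv.Perm.permMatrix, PEquiv.toMatrix_apply, Equiv.toPEquiv_apply]

lemma isPermMatrix_iff {m : ℕ} (P : Matrix (Fin m) (Fin m) ℝ) :
    IsPermMatrix P ↔ ∃ σ : Equiv.Perm (Fin m), P = σ.permMatrix ℝ := by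
  constructor
  · rintro ⟨h01, hrow, hcol⟩
    have hf : ∀ i, ∃ j, P i j = 1 := fun i => (hrow i).exists
    choose f hf using hf
    have hinj : Function.Injective f := by
      intro a b hab
      exact (hcol (f a)).unique (hf a) (hab ▸ hf b)
    let σ := Equiv.ofBijective f (Finite.injective_iff_bijective.mp hinj)
    refine ⟨σ, ?_⟩
    ext i j
    rw [permMatrix_apply]
    simp only [σ, Equiv.ofBijective_apply]
    by_cases h : f i = j
    · rw [if_pos h]; exact h ▸ hf i
    · rw [if_neg h]
      rcases h01 i j with h0 | h1
      · exact h0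
      · exact absurd ((hrow i).unique h1 (hf i)) (fun e => h e.symm)
  · rintro ⟨σ, rfl⟩
    refine ⟨fun i j => ?_, fun i => ⟨σ i, ?_, fun j hj => ?_⟩,
      fun j => ⟨σ.symm j, ?_, fun i hi => ?_⟩⟩
    · rw [permMatrix_apply]; by_cases h : σ i = j <;> simp [h]
    · simp [permMatrix_apply, Equiv.toPEquiv_apply]
    · simp only [permMatrix_apply] at hj
      by_contra h; rw [if_neg (fun e => h e.symm)] at hj; norm_num at hj
    · simp [permMatrix_apply, Equiv.toPEquiv_apply]
    · simp only [permMatrix_apply] at hi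
      by_contra h
      rw [if_neg] at hi
      · norm_num at hi
      · intro e; exact h (by rw [← e, Equiv.symm_apply_apply])

/-- The Birkhoff polytope of doubly stochastic m×m matrices is the convex hull of the
set of m×m permutation matrices. -/
theorem birkhoff_polytope (m : ℕ) :
    convexHull ℝ {P : Matrix (Fin m) (Fin m) ℝ | IsPermMatrix P} = DS m := by
  have h1 : {P : Matrix (Fin m) (Fin m) ℝ | IsPermMatrix P}
      = {σ.permMatrix ℝ | σ : Equiv.Perm (Fin m)} := by
    ext P; rw [Set.mem_setOf_eq, isPermMatrix_iff]; exact ⟨fun ⟨σ, h⟩ => ⟨σ, h.symm⟩, fun ⟨σ, h⟩ => ⟨σ, h.symm⟩⟩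
  have h2 : DS m = (doublyStochastic ℝ (Fin m) : Set (Matrix (Fin m) (Fin m) ℝ)) := by
    ext T
    rw [SetLike.mem_coe, mem_doublyStochastic_iff_sum]
    exact Iff.rfl
  rw [h1, h2, doublyStochastic_eq_convexHull_permMatrix]
end

section
/- For ground losses decomposable as ℓ(a,b) = f₁(a) + f₂(b) − h₁(a)h₂(b), the masked tensor product (L⊗T)_{i,i'} = Σ_{j,j'} T_{j,j'} ℓ(A_{i,j}, A'_{i',j'}) W_{i,j} W'_{i',j'} equals U₁ T W'ᵀ + W T U₂ᵀ − V₁ T V₂ᵀ, where U₁ = f₁(A)∘W, U₂ = f₂(A')∘W', V₁ = h₁(A)∘W, V₂ = h₂(A')∘W' and ∘ denotes entrywise multiplication. -/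
/-- For ground losses decomposable as `ℓ(a,b) = f₁ a + f₂ b − h₁ a * h₂ b`, the masked tensor
product `(L⊗T) i i' = ∑ j j', T j j' * ℓ (A i j) (A' i' j') * W i j * W' i' j'` equals
`U₁ * T * W'ᵀ + W * T * U₂ᵀ − V₁ * T * V₂ᵀ` with `U₁ = f₁(A)∘W`, `U₂ = f₂(A')∘W'`,
`V₁ = h₁(A)∘W`, `V₂ = h₂(A')∘W'` (entrywise application and multiplication). -/
theorem masked_tensor_product_factorization {n m : ℕ}
    (T : Matrix (Fin n) (Fin m) ℝ)
    (A W : Matrix (Fin n) (Fin n) ℝ) (A' W' : Matrix (Fin m) (Fin m) ℝ)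
    (ℓ : ℝ → ℝ → ℝ) (f₁ f₂ h₁ h₂ : ℝ → ℝ)
    (hdec : ∀ a b, ℓ a b = f₁ a + f₂ b - h₁ a * h₂ b) :
    (Matrix.of fun i i' => ∑ j, ∑ j', T j j' * ℓ (A i j) (A' i' j') * W i j * W' i' j')
      = (Matrix.of fun i j => f₁ (A i j) * W i j) * T * W'.transpose
        + W * T * (Matrix.of fun i' j' => f₂ (A' i' j') * W' i' j').transpose
        - (Matrix.of fun i j => h₁ (A i j) * W i j) * T
            * (Matrix.of fun i' j' => h₂ (A' i' j') * W' i' j').transpose := by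
  ext i i'
  simp only [Matrix.sub_apply, Matrix.add_apply, Matrix.mul_apply, Matrix.transpose_apply,
    Matrix.of_apply, hdec, Finset.sum_mul, Finset.mul_sum]
  rw [Finset.sum_comm (f := fun x i_1 => W i i_1 * T i_1 x * (f₂ (A' i' x) * W' i' x)),
      Finset.sum_comm (f := fun x i_1 => h₁ (A i i_1) * W i i_1 * T i_1 x * (h₂ (A' i' x) * W' i' x)),
      Finset.sum_comm (f := fun x i_1 => f₁ (A i i_1) * W i i_1 * T i_1 x * W' i' x),
      ← Finset.sum_add_distrib, ← Finset.sum_sub_distrib]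
  refine Finset.sum_congr rfl fun j _ => ?_
  rw [← Finset.sum_add_distrib, ← Finset.sum_sub_distrib]
  refine Finset.sum_congr rfl fun j' _ => ?_
  ring
end

section
/- If P is a permutation matrix achieving zero PMFGW objective against a padded target (h, F, A) with positive ground losses, then Pᵀĥ = h, the first m rows of PᵀF̂ equal those of F, and the top-left m×m block of PᵀÂP equals that of A. -/
/-- If a permutation matrix `P` (given by the permutation `σ`, `P i j = 1` iff `σ i = j`)
achieves zero PMFGW objective against a padded target `(h, F, A)` with positive ground losses,
then `Pᵀĥ = h`, the first `m` rows of `PᵀF̂` equal those of `F`, and the top-left `m×m` block of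
`PᵀÂP` equals that of `A`. -/
theorem perm_zero_objective_recovers_target {M d m : ℕ} (hm : m ≤ M)
    (ℓh : ℝ → ℝ → ℝ) (ℓF : (Fin d → ℝ) → (Fin d → ℝ) → ℝ) (ℓA : ℝ → ℝ → ℝ)
    (hℓh : ∀ x y, 0 ≤ ℓh x y ∧ (ℓh x y = 0 ↔ x = y))
    (hℓF : ∀ x y, 0 ≤ ℓF x y ∧ (ℓF x y = 0 ↔ x = y))
    (hℓA : ∀ x y, 0 ≤ ℓA x y ∧ (ℓA x y = 0 ↔ x = y))
    -- prediction
    (hh : Fin M → ℝ) (FF : Fin M → Fin d → ℝ) (AA : Matrix (Fin M) (Fin M) ℝ)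
    (hhh : ∀ i, hh i ∈ Set.Icc (0:ℝ) 1) (hAA : ∀ i k, AA i k ∈ Set.Icc (0:ℝ) 1)
    -- padded target
    (h : Fin M → ℝ) (F : Fin M → Fin d → ℝ) (A : Matrix (Fin M) (Fin M) ℝ)
    (hpad : ∀ j, h j = if (j : ℕ) < m then 1 else 0)
    -- the permutation matrix
    (σ : Equiv.Perm (Fin M))
    (P : Matrix (Fin M) (Fin M) ℝ) (hP : ∀ i j, P i j = if σ i = j then 1 else 0)
    -- zero PMFGW objective at plan P
    (hobj : (∑ i, ∑ j, P i j * ℓh (hh i) (h j))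
        + (∑ i, ∑ j, P i j * ℓF (FF i) (F j) * h j)
        + (∑ i, ∑ j, ∑ k, ∑ l, P i j * P k l * ℓA (AA i k) (A j l) * h j * h l) = 0) :
    (∀ j, ∑ i, P i j * hh i = h j) ∧
    (∀ j : Fin M, (j : ℕ) < m → ∀ t, ∑ i, P i j * FF i t = F j t) ∧
    (∀ j l : Fin M, (j : ℕ) < m → (l : ℕ) < m →
      ∑ i, ∑ k, P i j * P k l * AA i k = A j l) := by
  have hnn : ∀ j, 0 ≤ h j := by
    intro j; rw [hpad j]; split <;> norm_num
  -- collapse sums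
  have e1 : (∑ i, ∑ j, P i j * ℓh (hh i) (h j)) = ∑ i, ℓh (hh i) (h (σ i)) := by
    refine Finset.sum_congr rfl fun i _ => ?_
    simp [hP, ite_mul, Finset.sum_ite_eq]
  have e2 : (∑ i, ∑ j, P i j * ℓF (FF i) (F j) * h j)
      = ∑ i, ℓF (FF i) (F (σ i)) * h (σ i) := by
    refine Finset.sum_congr rfl fun i _ => ?_
    simp [hP, ite_mul, Finset.sum_ite_eq]
  have e3 : (∑ i, ∑ j, ∑ k, ∑ l, P i j * P k l * ℓA (AA i k) (A j l) * h j * h l)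
      = ∑ i, ∑ k, ℓA (AA i k) (A (σ i) (σ k)) * h (σ i) * h (σ k) := by
    refine Finset.sum_congr rfl fun i _ => ?_
    rw [Finset.sum_comm]
    refine Finset.sum_congr rfl fun k _ => ?_
    simp [hP, ite_mul, mul_ite, mul_zero, Finset.sum_ite_eq]
  rw [e1, e2, e3] at hobj
  have n1 : 0 ≤ ∑ i, ℓh (hh i) (h (σ i)) :=
    Finset.sum_nonneg fun i _ => (hℓh _ _).1
  have n2 : 0 ≤ ∑ i, ℓF (FF i) (F (σ i)) * h (σ i) :=
    Finset.sum_nonneg fun i _ => mul_nonneg (hℓF _ _).1 (hnn _)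
  have n3 : 0 ≤ ∑ i, ∑ k, ℓA (AA i k) (A (σ i) (σ k)) * h (σ i) * h (σ k) :=
    Finset.sum_nonneg fun i _ => Finset.sum_nonneg fun k _ =>
      mul_nonneg (mul_nonneg (hℓA _ _).1 (hnn _)) (hnn _)
  have z1 : (∑ i, ℓh (hh i) (h (σ i))) = 0 := by linarith
  have z2 : (∑ i, ℓF (FF i) (F (σ i)) * h (σ i)) = 0 := by linarith
  have z3 : (∑ i, ∑ k, ℓA (AA i k) (A (σ i) (σ k)) * h (σ i) * h (σ k)) = 0 := by linarith
  have t1 : ∀ i, ℓh (hh i) (h (σ i)) = 0 := fun i =>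
    (Finset.sum_eq_zero_iff_of_nonneg (fun i _ => (hℓh _ _).1)).mp z1 i (Finset.mem_univ i)
  have t2 : ∀ i, ℓF (FF i) (F (σ i)) * h (σ i) = 0 := fun i =>
    (Finset.sum_eq_zero_iff_of_nonneg (fun i _ => mul_nonneg (hℓF _ _).1 (hnn _))).mp z2 i
      (Finset.mem_univ i)
  have t3 : ∀ i k, ℓA (AA i k) (A (σ i) (σ k)) * h (σ i) * h (σ k) = 0 := by
    intro i k
    have := (Finset.sum_eq_zero_iff_of_nonneg (fun i _ => Finset.sum_nonneg fun k _ =>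
      mul_nonneg (mul_nonneg (hℓA _ _).1 (hnn _)) (hnn _))).mp z3 i (Finset.mem_univ i)
    exact (Finset.sum_eq_zero_iff_of_nonneg (fun k _ =>
      mul_nonneg (mul_nonneg (hℓA _ _).1 (hnn _)) (hnn _))).mp this k (Finset.mem_univ k)
  have csum : ∀ j (g : Fin M → ℝ), (∑ i, P i j * g i) = g (σ.symm j) := by
    intro j g
    have : ∀ i, P i j * g i = if i = σ.symm j then g i else 0 := by
      intro i
      by_cases hc : i = σ.symm j
      · subst hc; simp [hP]
      · have hcc : σ i ≠ j := fun hcc => hc (by rw [← hcc]; simp)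
        simp [hP, hc, hcc]
    simp [this]
  refine ⟨fun j => ?_, fun j hj t => ?_, fun j l hj hl => ?_⟩
  · rw [csum]
    have := (hℓh _ _).2.mp (t1 (σ.symm j))
    simpa using this
  · rw [csum j (fun i => FF i t)]
    have hF : ℓF (FF (σ.symm j)) (F j) = 0 := by
      have := t2 (σ.symm j)
      rw [Equiv.apply_symm_apply] at this
      have hj1 : h j = 1 := by rw [hpad]; simp [hj]
      rw [hj1, mul_one] at this; exact this
    rw [(hℓF _ _).2.mp hF]
  · have : (∑ i, ∑ k, P i j * P k l * AA i k)
        = AA (σ.symm j) (σ.symm l) := by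
      have : ∀ i, (∑ k, P i j * P k l * AA i k) = P i j * AA i (σ.symm l) := by
        intro i
        have := csum l (fun k => P i j * AA i k)
        simpa [mul_assoc, mul_comm, mul_left_comm] using this
      rw [Finset.sum_congr rfl fun i _ => this i, csum j (fun i => AA i (σ.symm l))]
    rw [this]
    have hA := t3 (σ.symm j) (σ.symm l)
    rw [Equiv.apply_symm_apply, Equiv.apply_symm_apply] at hA
    have hj1 : h j = 1 := by rw [hpad]; simp [hj]
    have hl1 : h l = 1 := by rw [hpad]; simp [hl]
    rw [hj1, hl1, mul_one, mul_one] at hA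
    exact (hℓA _ _).2.mp hA
end
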